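/- If T is a tree with no double pendants, then every vertex of T lies in some minimal zero forcing set of T. -/

import Mathlib

namespace ZF

variable {V : Type*}

/-- The set of vertices forced blue starting from `S`, under the standard color change
rule: a blue vertex with exactly one white neighbor forces that neighbor blue. -/
inductive Forced (G : SimpleGraph V) (S : Set V) : V → Prop
  | init {v : V} : v ∈ S → Forced G S v
  | force {u w : V} : Forced G S u → G.Adj u w →
      (∀ x, G.Adj u x → x ≠ w → Forced G S x) → Forced G S w

/-- `S` is a zero forcing set of `G`. -/
def IsZFS (G : SimpleGraph V) (S : Set V) : Prop := ∀ v, Forced G S v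

/-- `S` is a minimal zero forcing set of `G`. -/
def IsMinimalZFS (G : SimpleGraph V) (S : Set V) : Prop :=
  IsZFS G S ∧ ∀ S' ⊂ S, ¬ IsZFS G S'

/-- The zero forcing number of `G`. -/
noncomputable def zfNum (G : SimpleGraph V) : ℕ :=
  sInf {n | ∃ S : Set V, IsZFS G S ∧ S.ncard = n}

/-- A graph is well-forced if every minimal zero forcing set is minimum. -/
def WellForced (G : SimpleGraph V) : Prop :=
  ∀ S, IsMinimalZFS G S → S.ncard = zfNum G

/-- Degree of a vertex (as the `ncard` of its neighbor set). -/
noncomputable def deg (G : SimpleGraph V) (v : V) : ℕ := (G.neighborSet v).ncard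

end ZF

open ZF SimpleGraph

namespace ZFProof

variable {V : Type*}

lemma forced_mono {G : SimpleGraph V} {S S' : Set V} (h : S ⊆ S') :
    ∀ {v}, Forced G S v → Forced G S' v := by
  intro v hv
  induction hv with
  | init h' => exact .init (h h')
  | force h1 h2 h3 ih1 ih3 => exact .force ih1 h2 ih3

lemma not_forced_of_fort {G : SimpleGraph V} {S Z : Set V}
    (hdisj : ∀ z ∈ Z, z ∉ S)
    (hfort : ∀ u w, u ∉ Z → w ∈ Z → G.Adj u w → ∃ z, z ∈ Z ∧ z ≠ w ∧ G.Adj u z) :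
    ∀ {v}, Forced G S v → v ∉ Z := by
  intro v hv
  induction hv with
  | init h => exact fun hz => hdisj _ hz h
  | force h1 h2 h3 ih1 ih3 =>
    intro hw
    obtain ⟨z, hzZ, hzw, hadj⟩ := hfort _ _ ih1 hw h2
    exact ih3 z hadj hzw hzZ

lemma isMinimalZFS_of {G : SimpleGraph V} {S : Set V} (hz : IsZFS G S)
    (h : ∀ y ∈ S, ¬ IsZFS G (S \ {y})) : IsMinimalZFS G S := by
  refine ⟨hz, fun S' hss hz' => ?_⟩
  obtain ⟨y, hyS, hyS'⟩ := Set.exists_of_ssubset hss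
  refine h y hyS (fun v => forced_mono ?_ (hz' v))
  intro a ha
  exact ⟨hss.1 ha, fun hay => hyS' (by rwa [hay] at ha)⟩

section Tree

variable {T : SimpleGraph V} {x : V}

lemma split_dist (hT : T.IsTree) {a b t : V} (p : T.Walk a b) (hp : p.length = T.dist a b)
    (ht : t ∈ p.support) : T.dist a t + T.dist t b = T.dist a b := by
  classical
  have h1 : T.dist a t ≤ (p.takeUntil t ht).length := dist_le _
  have h2 : T.dist t b ≤ (p.dropUntil t ht).length := dist_le _
  have h3 : (p.takeUntil t ht).length + (p.dropUntil t ht).length = p.length := by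
    have := congrArg Walk.length (p.take_spec ht)
    rwa [Walk.length_append] at this
  have h4 : T.dist a b ≤ T.dist a t + T.dist t b := hT.isConnected.dist_triangle
  omega

lemma path_eq (hT : T.IsTree) {a b : V} {p q : T.Walk a b} (hp : p.IsPath) (hq : q.IsPath) :
    p = q := by
  have := hT.IsAcyclic.path_unique ⟨p, hp⟩ ⟨q, hq⟩
  exact congrArg Subtype.val this

lemma isPath_concat {u v w : V} {G : SimpleGraph V} {p : G.Walk u v} (hp : p.IsPath)
    (h : G.Adj v w) (hw : w ∉ p.support) : (p.concat h).IsPath := by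
  rw [← Walk.isPath_reverse_iff, Walk.reverse_concat]
  exact Walk.IsPath.cons hp.reverse (by simpa [Walk.support_reverse] using hw)

lemma adj_dist_ne (hT : T.IsTree) {a b : V} (h : T.Adj a b) : T.dist x a ≠ T.dist x b := by
  intro he
  obtain ⟨p, hp, hlp⟩ := hT.isConnected.exists_path_of_dist x a
  obtain ⟨q, hq, hlq⟩ := hT.isConnected.exists_path_of_dist x b
  have hnb : a ∉ q.support := by
    intro hin
    have hsp := split_dist hT q hlq hin
    have : 0 < T.dist a b := hT.isConnected.pos_dist_of_ne h.ne
    omega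
  have hC2 : (q.concat h.symm).IsPath := isPath_concat hq h.symm hnb
  have heq := path_eq hT hp hC2
  have : p.length = (q.concat h.symm).length := congrArg Walk.length heq
  rw [Walk.length_concat] at this
  omega

lemma adj_lev (hT : T.IsTree) {a b : V} (h : T.Adj a b) :
    T.dist x b = T.dist x a + 1 ∨ T.dist x a = T.dist x b + 1 := by
  have hab : T.dist a b = 1 := dist_eq_one_iff_adj.mpr h
  have hba : T.dist b a = 1 := dist_eq_one_iff_adj.mpr h.symm
  have h1 : T.dist x b ≤ T.dist x a + T.dist a b := hT.isConnected.dist_triangle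
  have h2 : T.dist x a ≤ T.dist x b + T.dist b a := hT.isConnected.dist_triangle
  have h3 := adj_dist_ne (x := x) hT h
  omega

open Classical in
/-- Parent of `v` in the tree rooted at `x` (junk value `v` at the root). -/
noncomputable def pa (T : SimpleGraph V) (x : V) (v : V) : V :=
  if h : ∃ u, T.Adj v u ∧ T.dist x u + 1 = T.dist x v then h.choose else v

/-- `w` is a child of `v` in the tree rooted at `x`. -/
def ch (T : SimpleGraph V) (x : V) (v w : V) : Prop := T.Adj v w ∧ T.dist x w = T.dist x v + 1

open Classical in
/-- Designated child: a childless child if one exists, otherwise any child. -/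
noncomputable def dc (T : SimpleGraph V) (x : V) (v : V) : V :=
  if h : ∃ w, ch T x v w ∧ ¬ ∃ w', ch T x w w' then h.choose
  else if h2 : ∃ w, ch T x v w then h2.choose else v

/-- `u` lies in the subtree below `v` (rooted at `x`). -/
def anc (T : SimpleGraph V) (x : V) (v u : V) : Prop := T.dist x v + T.dist v u = T.dist x u

lemma exists_adj_dist (hconn : T.Connected) {a b : V} (h : a ≠ b) :
    ∃ c, T.Adj b c ∧ T.dist a c + 1 = T.dist a b := by
  obtain ⟨p, hlp⟩ := (hconn b a).exists_walk_length_eq_dist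
  cases p with
  | nil => exact absurd rfl h.symm
  | @cons _ c _ hadj q =>
    refine ⟨c, hadj, ?_⟩
    have h1 : T.dist c a ≤ q.length := dist_le q
    have h2 : T.dist a c = T.dist c a := dist_comm
    have h3 : T.dist a b ≤ T.dist a c + T.dist c b := hconn.dist_triangle
    have h4 : T.dist c b = 1 := dist_eq_one_iff_adj.mpr hadj.symm
    have h5 : T.dist b a = T.dist a b := dist_comm
    simp only [Walk.length_cons] at hlp
    omega

lemma pa_spec (hT : T.IsTree) {v : V} (hv : v ≠ x) :
    T.Adj v (pa T x v) ∧ T.dist x (pa T x v) + 1 = T.dist x v := by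
  have h := exists_adj_dist (a := x) (b := v) hT.isConnected (Ne.symm hv)
  unfold pa
  rw [dif_pos h]
  exact h.choose_spec

lemma pa_x : pa T x x = x := by
  unfold pa
  rw [dif_neg]
  rintro ⟨u, -, hu⟩
  simp [SimpleGraph.dist_self] at hu

lemma parent_unique (hT : T.IsTree) {b a1 a2 : V} (h1 : T.Adj b a1) (h2 : T.Adj b a2)
    (l1 : T.dist x a1 + 1 = T.dist x b) (l2 : T.dist x a2 + 1 = T.dist x b) : a1 = a2 := by
  by_contra hne
  obtain ⟨p1, hp1, hl1⟩ := hT.isConnected.exists_path_of_dist x a1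
  obtain ⟨p2, hp2, hl2⟩ := hT.isConnected.exists_path_of_dist x a2
  have hb1 : b ∉ p1.support := by
    intro hin
    have hsp := split_dist hT p1 hl1 hin
    have hpos : 0 < T.dist b a1 := hT.isConnected.pos_dist_of_ne h1.ne
    omega
  have hb2 : b ∉ p2.support := by
    intro hin
    have hsp := split_dist hT p2 hl2 hin
    have hpos : 0 < T.dist b a2 := hT.isConnected.pos_dist_of_ne h2.ne
    omega
  have hC1 : (p1.concat h1.symm).IsPath := isPath_concat hp1 h1.symm hb1
  have hC2 : (p2.concat h2.symm).IsPath := isPath_concat hp2 h2.symm hb2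
  have heq : p1.concat h1.symm = p2.concat h2.symm := path_eq hT hC1 hC2
  have ha1 : a1 ∈ (p2.concat h2.symm).support := by
    rw [← heq, Walk.support_concat, List.mem_append]
    exact Or.inl (Walk.end_mem_support p1)
  rw [Walk.support_concat, List.mem_append, List.mem_singleton] at ha1
  rcases ha1 with hs | hs
  · have hsp := split_dist hT p2 hl2 hs
    exact hne (hT.isConnected.dist_eq_zero_iff.mp (by omega))
  · exact h1.ne hs.symm

lemma ch_ne_x {v w : V} (h : ch T x v w) : w ≠ x := by
  intro h'
  subst h'
  have := h.2
  simp [SimpleGraph.dist_self] at this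

lemma ch_pa (hT : T.IsTree) {v w : V} (h : ch T x v w) : v = pa T x w := by
  have hwx : w ≠ x := ch_ne_x h
  obtain ⟨hadj, hlev⟩ := pa_spec (x := x) hT hwx
  exact parent_unique hT h.1.symm hadj (by have := h.2; omega) hlev

lemma pa_ch (hT : T.IsTree) {v : V} (hv : v ≠ x) : ch T x (pa T x v) v := by
  obtain ⟨hadj, hlev⟩ := pa_spec (x := x) hT hv
  exact ⟨hadj.symm, by omega⟩

lemma adj_cases (hT : T.IsTree) {a b : V} (h : T.Adj a b) : ch T x a b ∨ ch T x b a := by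
  rcases adj_lev (x := x) hT h with h' | h'
  · exact Or.inl ⟨h, h'⟩
  · exact Or.inr ⟨h.symm, h'⟩

lemma dc_ch {v : V} (h : ∃ w, ch T x v w) : ch T x v (dc T x v) := by
  classical
  unfold dc
  by_cases h1 : ∃ w0, ch T x v w0 ∧ ¬ ∃ w', ch T x w0 w'
  · rw [dif_pos h1]
    exact h1.choose_spec.1
  · rw [dif_neg h1, dif_pos h]
    exact h.choose_spec

lemma nochild_nbhd (hT : T.IsTree) {v w : V} (h : ch T x v w)
    (hno : ¬ ∃ w', ch T x w w') : T.neighborSet w = {v} := by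
  ext z
  simp only [mem_neighborSet, Set.mem_singleton_iff]
  constructor
  · intro hz
    rcases adj_cases (x := x) hT hz with hc | hc
    · exact absurd ⟨z, hc⟩ hno
    · exact parent_unique (x := x) hT hz h.1.symm (by have := hc.2; omega) (by have := h.2; omega)
  · rintro rfl
    exact h.1.symm

lemma dc_side_haschild (hT : T.IsTree)
    (hnd : ¬ ∃ u w v : V, u ≠ w ∧ T.neighborSet u = {v} ∧ T.neighborSet w = {v})
    {v w : V} (h : ch T x v w) (hne : w ≠ dc T x v) : ∃ w', ch T x w w' := by
  by_contra hno
  have h1 : ∃ w0, ch T x v w0 ∧ ¬ ∃ w', ch T x w0 w' := ⟨w, h, hno⟩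
  have hdc : dc T x v = h1.choose := by unfold dc; rw [dif_pos h1]
  obtain ⟨hch2, hno2⟩ := h1.choose_spec
  rw [← hdc] at hch2 hno2
  exact hnd ⟨w, dc T x v, v, hne, nochild_nbhd hT h hno, nochild_nbhd hT hch2 hno2⟩

lemma anc_refl {v : V} : anc T x v v := by simp [anc, SimpleGraph.dist_self]

lemma anc_x {u : V} : anc T x x u := by simp [anc, SimpleGraph.dist_self]

lemma anc_trans (hT : T.IsTree) {v w u : V} (h1 : anc T x v w) (h2 : anc T x w u) :
    anc T x v u := by
  have t1 : T.dist v u ≤ T.dist v w + T.dist w u := hT.isConnected.dist_triangle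
  have t2 : T.dist x u ≤ T.dist x v + T.dist v u := hT.isConnected.dist_triangle
  unfold anc at *
  omega

lemma anc_eq (hT : T.IsTree) {v u : V} (h : anc T x v u) (hle : T.dist x u ≤ T.dist x v) :
    v = u := by
  have : T.dist v u = 0 := by unfold anc at h; omega
  exact hT.isConnected.dist_eq_zero_iff.mp this

lemma anc_ne_x (hT : T.IsTree) {v u : V} (h : anc T x v u) (hv : v ≠ x) : u ≠ x := by
  have hpos : 0 < T.dist x v := hT.isConnected.pos_dist_of_ne (Ne.symm hv)
  intro h'
  rw [h'] at h
  unfold anc at h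
  have h0 : T.dist x x = 0 := SimpleGraph.dist_self
  omega

lemma ch_anc {v w : V} (h : ch T x v w) : anc T x v w := by
  have h1 : T.dist v w = 1 := dist_eq_one_iff_adj.mpr h.1
  have h2 := h.2
  unfold anc
  omega

lemma anc_parent (hT : T.IsTree) {v w : V} (h : anc T x v w) (hne : w ≠ v) (hwx : w ≠ x) :
    anc T x v (pa T x w) := by
  obtain ⟨t, hadj, hdt⟩ := exists_adj_dist (a := v) (b := w) hT.isConnected (Ne.symm hne)
  have hlt := adj_lev (x := x) hT hadj
  have h1 : T.dist x t ≤ T.dist x v + T.dist v t := hT.isConnected.dist_triangle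
  unfold anc at h
  have hlev : T.dist x w = T.dist x t + 1 := by omega
  obtain ⟨hadj', hlev'⟩ := pa_spec (x := x) hT hwx
  have ht : t = pa T x w := parent_unique hT hadj hadj' (by omega) hlev'
  have hanc : T.dist x v + T.dist v t = T.dist x t := by omega
  rw [← ht]
  exact hanc

lemma anc_succ (hT : T.IsTree) {v u : V} (h : anc T x v u) (hne : u ≠ v) :
    ∃ s, ch T x v s ∧ anc T x s u := by
  obtain ⟨s, hadj, hds⟩ := exists_adj_dist (a := u) (b := v) hT.isConnected hne
  have hc1 : T.dist u s = T.dist s u := dist_comm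
  have hc2 : T.dist u v = T.dist v u := dist_comm
  have hlt := adj_lev (x := x) hT hadj
  have h1 : T.dist x u ≤ T.dist x s + T.dist s u := hT.isConnected.dist_triangle
  unfold anc at h
  have hlev : T.dist x s = T.dist x v + 1 := by omega
  refine ⟨s, ⟨hadj, hlev⟩, ?_⟩
  unfold anc
  omega

lemma succ_unique (hT : T.IsTree) {v s1 s2 u : V} (h1 : ch T x v s1) (h2 : ch T x v s2)
    (a1 : anc T x s1 u) (a2 : anc T x s2 u) : s1 = s2 := by
  by_contra hne
  obtain ⟨p1, hlp1⟩ := hT.isConnected.exists_walk_length_eq_dist x s1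
  obtain ⟨p2, hlp2⟩ := hT.isConnected.exists_walk_length_eq_dist x s2
  obtain ⟨q1, hlq1⟩ := hT.isConnected.exists_walk_length_eq_dist s1 u
  obtain ⟨q2, hlq2⟩ := hT.isConnected.exists_walk_length_eq_dist s2 u
  have hP1 : (p1.append q1).IsPath := Walk.isPath_of_length_eq_dist _
    (by rw [Walk.length_append, hlp1, hlq1]; exact a1)
  have hP2 : (p2.append q2).IsPath := Walk.isPath_of_length_eq_dist _
    (by rw [Walk.length_append, hlp2, hlq2]; exact a2)
  have heq : p1.append q1 = p2.append q2 := path_eq hT hP1 hP2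
  have hs : s1 ∈ (p2.append q2).support := by
    rw [← heq, Walk.mem_support_append_iff]
    exact Or.inl (Walk.end_mem_support p1)
  rw [Walk.mem_support_append_iff] at hs
  have hl1 := h1.2
  have hl2 := h2.2
  unfold anc at a1 a2
  rcases hs with hs | hs
  · have hsp := split_dist hT p2 hlp2 hs
    exact hne (hT.isConnected.dist_eq_zero_iff.mp (by omega))
  · have hsp := split_dist hT q2 hlq2 hs
    exact hne (hT.isConnected.dist_eq_zero_iff.mp (by omega)).symm

/-- The candidate minimal zero forcing set: the root plus all non-designated children. -/
def SS (T : SimpleGraph V) (x : V) : Set V :=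
  insert x {v | v ≠ x ∧ v ≠ dc T x (pa T x v)}

lemma x_mem_SS : x ∈ SS T x := Set.mem_insert _ _

lemma side_mem_SS {v : V} (h1 : v ≠ x) (h2 : v ≠ dc T x (pa T x v)) : v ∈ SS T x :=
  Set.mem_insert_of_mem _ ⟨h1, h2⟩

lemma forceA [Fintype V] (hT : T.IsTree) :
    ∀ n v, Set.ncard {u | anc T x v u} ≤ n → Forced T (SS T x) v →
      (v = x ∨ Forced T (SS T x) (pa T x v)) → ∀ u, anc T x v u → Forced T (SS T x) u := by
  intro n
  induction n with
  | zero =>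
    intro v hcard _ _ u _
    exfalso
    have hpos : 0 < Set.ncard {u | anc T x v u} :=
      (Set.ncard_pos (Set.toFinite _)).mpr ⟨v, anc_refl⟩
    omega
  | succ n ih =>
    intro v hcard hv hpav u hu
    rcases eq_or_ne u v with rfl | hne
    · exact hv
    · obtain ⟨s, hs, hsu⟩ := anc_succ hT hu hne
      have hvn : ¬ anc T x s v := by
        intro hcon
        unfold anc at hcon
        have := hs.2
        omega
      have hsub : {w | anc T x s w} ⊂ {w | anc T x v w} := by
        rw [Set.ssubset_def]
        refine ⟨fun w hw => anc_trans hT (ch_anc hs) hw, fun hsup => hvn (hsup anc_refl)⟩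
      have hcard_s : Set.ncard {w | anc T x s w} ≤ n := by
        have h1 : Set.ncard {w | anc T x s w} < Set.ncard {w | anc T x v w} :=
          Set.ncard_lt_ncard hsub (Set.toFinite _)
        omega
      have hchpa : v = pa T x s := ch_pa hT hs
      by_cases hsd : s = dc T x v
      · have hfs : Forced T (SS T x) s := by
          refine Forced.force hv hs.1 ?_
          intro z hz hzne
          rcases adj_cases (x := x) hT hz with hc | hc
          · refine .init (side_mem_SS (ch_ne_x hc) ?_)
            rw [← ch_pa hT hc, ← hsd]
            exact hzne
          · rcases hpav with rfl | hf
            · exact absurd rfl (ch_ne_x hc)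
            · rw [show z = pa T x v from ch_pa hT hc]
              exact hf
        exact ih s hcard_s hfs (Or.inr (by rw [← hchpa]; exact hv)) u hsu
      · have hmem : s ∈ SS T x := side_mem_SS (ch_ne_x hs) (by rw [← hchpa]; exact hsd)
        exact ih s hcard_s (.init hmem) (.inr (by rw [← hchpa]; exact hv)) u hsu

lemma SS_zfs [Fintype V] (hT : T.IsTree) : IsZFS T (SS T x) := fun u =>
  forceA hT (Set.ncard {w | anc T x x w}) x le_rfl (.init x_mem_SS) (.inl rfl) u anc_x

lemma SS_diff_x : SS T x \ {x} = {v | v ≠ x ∧ v ≠ dc T x (pa T x v)} := by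
  ext v
  constructor
  · rintro ⟨hv, hvx⟩
    rcases hv with rfl | h
    · exact absurd rfl hvx
    · exact h
  · intro h
    exact ⟨Set.mem_insert_of_mem _ h, h.1⟩

lemma partB (hT : T.IsTree)
    (hnd : ¬ ∃ u w v : V, u ≠ w ∧ T.neighborSet u = {v} ∧ T.neighborSet w = {v}) :
    ¬ IsZFS T (SS T x \ {x}) := by
  intro hzfs
  let Sdp : V → Prop := fun v => v ≠ x ∧ v ≠ dc T x (pa T x v)
  let Fp : V → Prop := fun u => Sdp u ∨ ∃ y, (Sdp y ∧ Sdp (pa T x y)) ∧ anc T x y u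
  have hxF : ¬ Fp x := by
    rintro (⟨hx, -⟩ | ⟨y, ⟨⟨hy, -⟩, -⟩, hanc⟩)
    · exact hx rfl
    · exact hy (anc_eq hT hanc (by simp [SimpleGraph.dist_self]))
  have hdisj : ∀ z ∈ {z | ¬ Fp z}, z ∉ SS T x \ {x} := by
    intro z hz hzS
    rw [SS_diff_x] at hzS
    exact hz (Or.inl hzS)
  have hfort : ∀ u w, u ∉ {z | ¬ Fp z} → w ∈ {z | ¬ Fp z} → T.Adj u w →
      ∃ z, z ∈ {z | ¬ Fp z} ∧ z ≠ w ∧ T.Adj u z := by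
    intro u w huZ hwZ hadj
    have huF : Fp u := not_not.mp huZ
    by_cases hanch : ∃ y, (Sdp y ∧ Sdp (pa T x y)) ∧ anc T x y u
    · exfalso
      obtain ⟨y, hy2, hyu⟩ := hanch
      apply hwZ
      rcases adj_cases (x := x) hT hadj with hc | hc
      · exact Or.inr ⟨y, hy2, anc_trans hT hyu (ch_anc hc)⟩
      · rcases eq_or_ne u y with rfl | huy
        · rw [show w = pa T x u from ch_pa hT hc]
          exact Or.inl hy2.2
        · exact Or.inr ⟨y, hy2, by
            rw [show w = pa T x u from ch_pa hT hc]
            exact anc_parent hT hyu huy (anc_ne_x hT hyu hy2.1.1)⟩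
    · have husd : Sdp u := by
        rcases huF with h | h
        · exact h
        · exact absurd h hanch
      have hux : u ≠ x := husd.1
      have hchu : ch T x (pa T x u) u := pa_ch hT hux
      have hpaZ : ¬ Fp (pa T x u) := by
        rintro (hp | ⟨y, hy2, hyp⟩)
        · exact hanch ⟨u, ⟨husd, hp⟩, anc_refl⟩
        · exact hanch ⟨y, hy2, anc_trans hT hyp (ch_anc hchu)⟩
      have hhc : ∃ w', ch T x u w' := dc_side_haschild hT hnd hchu husd.2
      have hcdu : ch T x u (dc T x u) := dc_ch hhc
      have hdcZ : ¬ Fp (dc T x u) := by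
        rintro (hp | ⟨y, hy2, hyp⟩)
        · exact hp.2 (by rw [← ch_pa hT hcdu])
        · have hyne : y ≠ dc T x u := by
            intro h'
            exact hy2.1.2 (by rw [h', ← ch_pa hT hcdu])
          have hyu : anc T x y u := by
            have h1 := anc_parent hT hyp hyne.symm (ch_ne_x hcdu)
            rwa [← ch_pa hT hcdu] at h1
          exact hanch ⟨y, hy2, hyu⟩
      have hlevne : pa T x u ≠ dc T x u := by
        intro h'
        have e1 := (pa_spec (x := x) hT hux).2
        have e2 := hcdu.2
        rw [h'] at e1
        omega
      rcases adj_cases (x := x) hT hadj with hc | hc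
      · rcases eq_or_ne w (dc T x u) with rfl | hwd
        · exact ⟨pa T x u, hpaZ, fun h' => hlevne h', (pa_spec (x := x) hT hux).1⟩
        · exact absurd (Or.inl ⟨ch_ne_x hc, by rw [← ch_pa hT hc]; exact hwd⟩) hwZ
      · have hw : w = pa T x u := ch_pa hT hc
        exact ⟨dc T x u, hdcZ, by rw [hw]; exact fun h' => hlevne h'.symm, hcdu.1⟩
  exact not_forced_of_fort hdisj hfort (hzfs x) hxF

/-- The region that stays stalled when a side child is removed. -/
def UU (T : SimpleGraph V) (x : V) (v : V) : Set V :=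
  {u | anc T x v u ∧ ∀ t, anc T x v t → anc T x t u → t ≠ v →
    (t = dc T x (pa T x t) ∨ (t ≠ u ∧ anc T x (dc T x t) u))}

lemma mem_UU_self (hT : T.IsTree) {v : V} : v ∈ UU T x v := by
  refine ⟨anc_refl, fun t hvt htv htne => ?_⟩
  exact absurd (anc_eq hT hvt (by unfold anc at htv; omega)).symm htne

lemma mem_UU_dc_self {v u : V} (hT : T.IsTree) (h : u ∈ UU T x v) (hne : u ≠ v) :
    u = dc T x (pa T x u) := by
  rcases h.2 u h.1 anc_refl hne with h' | ⟨hne', -⟩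
  · exact h'
  · exact absurd rfl hne'

lemma anc_dc_convert (hT : T.IsTree) {t u w : V} (htu : anc T x t u) (huw : anc T x u w)
    (hne : u ≠ t) (hdc : anc T x (dc T x t) w) : anc T x (dc T x t) u := by
  obtain ⟨s, hcs, hsu⟩ := anc_succ hT htu hne
  have hcd : ch T x t (dc T x t) := dc_ch ⟨s, hcs⟩
  have hsw : anc T x s w := anc_trans hT hsu huw
  have heq := succ_unique hT hcd hcs hdc hsw
  rw [heq]
  exact hsu

lemma mem_UU_prefix (hT : T.IsTree) {v u w : V} (hw : w ∈ UU T x v) (hvu : anc T x v u)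
    (huw : anc T x u w) (hd : u = v ∨ u = dc T x (pa T x u)) : u ∈ UU T x v := by
  refine ⟨hvu, fun t hvt htu htv => ?_⟩
  rcases eq_or_ne t u with rfl | htne
  · rcases hd with rfl | hd'
    · exact absurd rfl htv
    · exact Or.inl hd'
  · rcases hw.2 t hvt (anc_trans hT htu huw) htv with h' | ⟨-, hdc⟩
    · exact Or.inl h'
    · exact Or.inr ⟨htne, anc_dc_convert hT htu huw htne.symm hdc⟩

lemma mem_UU_dc (hT : T.IsTree) {v w : V} (hw : w ∈ UU T x v) (hch : ∃ s, ch T x w s) :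
    dc T x w ∈ UU T x v := by
  have hcw : ch T x w (dc T x w) := dc_ch hch
  refine ⟨anc_trans hT hw.1 (ch_anc hcw), fun t hvt htd htv => ?_⟩
  rcases eq_or_ne t (dc T x w) with rfl | htne
  · exact Or.inl (by rw [← ch_pa hT hcw])
  · have htw : anc T x t w := by
      have h1 := anc_parent hT htd htne.symm (ch_ne_x hcw)
      rwa [← ch_pa hT hcw] at h1
    rcases eq_or_ne t w with rfl | htw'
    · exact Or.inr ⟨htne, anc_refl⟩
    · rcases hw.2 t hvt htw htv with h' | ⟨-, hdc⟩
      · exact Or.inl h'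
      · exact Or.inr ⟨htne, anc_trans hT hdc (ch_anc hcw)⟩

lemma mem_UU_side_dc (hT : T.IsTree) {v w s : V} (hw : w ∈ UU T x v) (hcs : ch T x w s)
    (hsne : s ≠ dc T x w) (hs : ∃ s', ch T x s s') : dc T x s ∈ UU T x v := by
  have hcd : ch T x s (dc T x s) := dc_ch hs
  refine ⟨anc_trans hT (anc_trans hT hw.1 (ch_anc hcs)) (ch_anc hcd),
    fun t hvt htd htv => ?_⟩
  rcases eq_or_ne t (dc T x s) with rfl | ht1
  · exact Or.inl (by rw [← ch_pa hT hcd])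
  · have hts : anc T x t s := by
      have h1 := anc_parent hT htd ht1.symm (ch_ne_x hcd)
      rwa [← ch_pa hT hcd] at h1
    rcases eq_or_ne t s with rfl | ht2
    · exact Or.inr ⟨ht1, anc_refl⟩
    · have htw : anc T x t w := by
        have h1 := anc_parent hT hts ht2.symm (ch_ne_x hcs)
        rwa [← ch_pa hT hcs] at h1
      rcases eq_or_ne t w with rfl | ht3
      · rcases eq_or_ne t v with rfl | hwv
        · exact absurd rfl htv
        · exact Or.inl (mem_UU_dc_self hT hw hwv)
      · rcases hw.2 t hvt htw htv with h' | ⟨-, hdc⟩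
        · exact Or.inl h'
        · exact Or.inr ⟨ht1, anc_trans hT hdc (anc_trans hT (ch_anc hcs) (ch_anc hcd))⟩

lemma fortC_case (hT : T.IsTree)
    (hnd : ¬ ∃ u w v : V, u ≠ w ∧ T.neighborSet u = {v} ∧ T.neighborSet w = {v})
    {v u w : V} (hvx : v ≠ x) (hU : w ∈ UU T x v)
    (hadj : T.Adj u w) (huU : u ∉ UU T x v) (hpa : u ≠ pa T x v) :
    ∃ z, z ∈ UU T x v ∧ z ≠ w ∧ T.Adj u z := by
  rcases adj_cases (x := x) hT hadj with hcuw | hcwu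
  · -- `w` is a child of `u`, i.e. `u = pa w`
    have hwv : w ≠ v := by
      intro h'
      rw [h'] at hcuw
      exact hpa (ch_pa hT hcuw)
    have hvu : anc T x v u := by
      have h1 := anc_parent hT hU.1 hwv (ch_ne_x hcuw)
      rwa [← ch_pa hT hcuw] at h1
    have hunv : u ≠ v := by
      intro h'
      rw [h'] at huU
      exact huU (mem_UU_self hT)
    have hux : u ≠ x := by
      intro h'
      rw [h'] at hvu
      exact hvx (anc_eq hT hvu (by simp [SimpleGraph.dist_self]))
    have hudc : ¬ (u = dc T x (pa T x u)) := by
      intro h'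
      exact huU (mem_UU_prefix hT hU hvu (ch_anc hcuw) (Or.inr h'))
    have hpau : pa T x u ∈ UU T x v := by
      rcases eq_or_ne (pa T x u) v with h' | hpv
      · rw [h']
        exact mem_UU_self hT
      · have hvpu : anc T x v (pa T x u) := anc_parent hT hvu hunv hux
        have hpuw : anc T x (pa T x u) w :=
          anc_trans hT (ch_anc (pa_ch hT hux)) (ch_anc hcuw)
        rcases hU.2 (pa T x u) hvpu hpuw hpv with h' | ⟨-, hdc⟩
        · exact mem_UU_prefix hT hU hvpu hpuw (Or.inr h')
        · exfalso
          have hcpu : ch T x (pa T x u) u := pa_ch hT hux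
          have hcd : ch T x (pa T x u) (dc T x (pa T x u)) := dc_ch ⟨u, hcpu⟩
          have heq := succ_unique hT hcd hcpu hdc (ch_anc hcuw)
          exact hudc heq.symm
    refine ⟨pa T x u, hpau, ?_, (pa_spec (x := x) hT hux).1⟩
    intro h'
    have e1 := (pa_spec (x := x) hT hux).2
    have e2 := hcuw.2
    rw [h'] at e1
    omega
  · -- `u` is a child of `w`
    have hune : u ≠ dc T x w := by
      intro h'
      rw [h'] at huU
      exact huU (mem_UU_dc hT hU ⟨u, hcwu⟩)
    have hs : ∃ s', ch T x u s' := dc_side_haschild hT hnd hcwu hune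
    refine ⟨dc T x u, mem_UU_side_dc hT hU hcwu hune hs, ?_, (dc_ch hs).1⟩
    intro h'
    have e1 := (dc_ch hs).2
    have e2 := hcwu.2
    rw [h'] at e1
    omega

lemma partC (hT : T.IsTree)
    (hnd : ¬ ∃ u w v : V, u ≠ w ∧ T.neighborSet u = {v} ∧ T.neighborSet w = {v})
    {y : V} (hy : y ≠ x) (hys : y ≠ dc T x (pa T x y)) :
    ¬ IsZFS T (SS T x \ {y}) := by
  intro hzfs
  have hchy : ch T x (pa T x y) y := pa_ch hT hy
  have hd0 : ch T x (pa T x y) (dc T x (pa T x y)) := dc_ch ⟨y, hchy⟩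
  have hyZ : y ∈ UU T x y := mem_UU_self hT
  have hdisj : ∀ z ∈ UU T x y ∪ UU T x (dc T x (pa T x y)), z ∉ SS T x \ {y} := by
    rintro z hz ⟨hzS, hzy⟩
    have hzy' : z ≠ y := by simpa using hzy
    rcases Set.mem_insert_iff.mp hzS with rfl | ⟨hzx, hzdc⟩
    · rcases hz with h | h
      · exact hy (anc_eq hT h.1 (by simp [SimpleGraph.dist_self]))
      · exact (ch_ne_x hd0) (anc_eq hT h.1 (by simp [SimpleGraph.dist_self]))
    · rcases hz with h | h
      · rcases eq_or_ne z y with rfl | hne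
        · exact hzy' rfl
        · exact hzdc (mem_UU_dc_self hT h hne)
      · rcases eq_or_ne z (dc T x (pa T x y)) with rfl | hne
        · exact hzdc (by rw [← ch_pa hT hd0])
        · exact hzdc (mem_UU_dc_self hT h hne)
  have hfort : ∀ u w, u ∉ (UU T x y ∪ UU T x (dc T x (pa T x y))) →
      w ∈ (UU T x y ∪ UU T x (dc T x (pa T x y))) → T.Adj u w →
      ∃ z, z ∈ UU T x y ∪ UU T x (dc T x (pa T x y)) ∧ z ≠ w ∧ T.Adj u z := by
    intro u w huZ hwZ hadj
    have huy : u ∉ UU T x y := fun h => huZ (Or.inl h)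
    have hud : u ∉ UU T x (dc T x (pa T x y)) := fun h => huZ (Or.inr h)
    rcases hwZ with hw | hw
    · by_cases hup : u = pa T x y
      · have hwy : w = y := by
          have h1 := hchy.2
          have h2 := adj_lev (x := x) hT hadj
          have h3 := hw.1
          unfold anc at h3
          rw [hup] at h2
          exact (anc_eq hT hw.1 (by omega)).symm
        refine ⟨dc T x (pa T x y), Or.inr (mem_UU_self hT), ?_, ?_⟩
        · rw [hwy]
          exact Ne.symm hys
        · rw [hup]
          exact hd0.1
      · obtain ⟨z, hz, hzw, hza⟩ := fortC_case hT hnd hy hw hadj huy hup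
        exact ⟨z, Or.inl hz, hzw, hza⟩
    · by_cases hup : u = pa T x (dc T x (pa T x y))
      · have hpd : pa T x (dc T x (pa T x y)) = pa T x y := (ch_pa hT hd0).symm
        have hwd : w = dc T x (pa T x y) := by
          have h1 := hd0.2
          have h2 := adj_lev (x := x) hT hadj
          have h3 := hw.1
          unfold anc at h3
          rw [hup, hpd] at h2
          exact (anc_eq hT hw.1 (by omega)).symm
        refine ⟨y, Or.inl hyZ, ?_, ?_⟩
        · rw [hwd]
          exact hys
        · rw [hup, hpd]
          exact hchy.1
      · obtain ⟨z, hz, hzw, hza⟩ := fortC_case hT hnd (ch_ne_x hd0) hw hadj hud hup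
        exact ⟨z, Or.inr hz, hzw, hza⟩
  exact not_forced_of_fort hdisj hfort (hzfs y) (Or.inl hyZ)

end Tree

end ZFProof

/-- If `T` is a tree with no double pendants, then every vertex of `T`
lies in some minimal zero forcing set of `T`. -/
theorem no_double_pendant_every_vertex_minimal {V : Type*} [Fintype V]
    (T : SimpleGraph V) (hT : T.IsTree)
    (hnd : ¬ ∃ u w v : V, u ≠ w ∧ T.neighborSet u = {v} ∧ T.neighborSet w = {v})
    (x : V) :
    ∃ S : Set V, IsMinimalZFS T S ∧ x ∈ S := by
  classical
  refine ⟨ZFProof.SS T x, ?_, ZFProof.x_mem_SS⟩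
  apply ZFProof.isMinimalZFS_of (ZFProof.SS_zfs hT)
  intro y hy
  rcases Set.mem_insert_iff.mp hy with rfl | ⟨hy1, hy2⟩
  · exact ZFProof.partB hT hnd
  · exact ZFProof.partC hT hnd hy1 hy2
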